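/- Every noncyclic subgroup G of PGL_2(F_q) has the property that any monic irreducible polynomial f over F_q of degree at least 2 which satisfies [B]∘f = f for all [B] ∈ G must have degree exactly 2. -/

import Mathlib

open Polynomial

variable {F : Type*} [Field F] [Fintype F]

/-- For `A = [[a,b],[c,d]]`, the polynomial `A ∘ f = (bX+d)^k f((aX+c)/(bX+d))`,
where `k = natDegree f`. -/
noncomputable def mobApply (A : Matrix (Fin 2) (Fin 2) F) (f : F[X]) : F[X] :=
  ∑ i ∈ Finset.range (f.natDegree + 1),
    C (f.coeff i) * (C (A 0 0) * X + C (A 1 0)) ^ i *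
      (C (A 0 1) * X + C (A 1 1)) ^ (f.natDegree - i)

/-- The monic normalization `[A] ∘ f` of `A ∘ f`. -/
noncomputable def mobAct (A : Matrix (Fin 2) (Fin 2) F) (f : F[X]) : F[X] :=
  C (mobApply A f).leadingCoeff⁻¹ * mobApply A f

/-- The projective general linear group `PGL₂(F)`, as the quotient of `GL₂(F)` by
its center (the scalar matrices). -/
abbrev PGL2 (F : Type*) [Field F] : Type _ :=
  GL (Fin 2) F ⧸ Subgroup.center (GL (Fin 2) F)

/-! ### Auxiliary lemmas -/

section MuMap

variable {F₀ : Type*} [Field F₀] {E : Type*} [Field E] [Algebra F₀ E]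

/-- The Möbius action of a matrix on an element of a field extension. -/
noncomputable def muMap (A : Matrix (Fin 2) (Fin 2) F₀) (x : E) : E :=
  (algebraMap F₀ E (A 0 0) * x + algebraMap F₀ E (A 1 0)) /
    (algebraMap F₀ E (A 0 1) * x + algebraMap F₀ E (A 1 1))

lemma mu_comp (A1 A2 : Matrix (Fin 2) (Fin 2) F₀) (x : E)
    (h1 : algebraMap F₀ E (A1 0 1) * x + algebraMap F₀ E (A1 1 1) ≠ 0)
    (h12 : algebraMap F₀ E ((A1 * A2) 0 1) * x + algebraMap F₀ E ((A1 * A2) 1 1) ≠ 0)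
    (h2 : algebraMap F₀ E (A2 0 1) * (muMap A1 x) + algebraMap F₀ E (A2 1 1) ≠ 0) :
    muMap (A1 * A2) x = muMap A2 (muMap A1 x) := by
  rw [muMap, muMap, muMap]
  rw [muMap] at h2
  rw [div_eq_div_iff h12 h2]
  have h1' : x * algebraMap F₀ E (A1 0 1) + algebraMap F₀ E (A1 1 1) ≠ 0 := by rwa [mul_comm]
  field_simp at h2 ⊢
  simp only [Matrix.mul_apply, Fin.sum_univ_two] at h12 ⊢
  push_cast [map_add, map_mul]
  ring

/-- Algebra equivalences commute with the Möbius action. -/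
lemma mu_algEquiv (σ : E ≃ₐ[F₀] E) (A : Matrix (Fin 2) (Fin 2) F₀) (x : E) :
    σ (muMap A x) = muMap A (σ x) := by
  simp [muMap, map_div₀, map_add, map_mul, AlgEquiv.commutes]

lemma aux_not_range {f : F₀[X]} (hirr : Irreducible f) (hdeg : 2 ≤ f.natDegree) {x : E}
    (hx : aeval x f = 0) (c : F₀) : x ≠ algebraMap F₀ E c := by
  rintro rfl
  rw [aeval_algebraMap_apply] at hx
  have hc : f.IsRoot c := by
    have := (algebraMap F₀ E).injective (by simpa using hx)
    simpa [IsRoot] using this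
  obtain ⟨g, hg⟩ := (dvd_iff_isRoot.mpr hc)
  rcases hirr.isUnit_or_isUnit hg with h | h
  · have := natDegree_eq_zero_of_isUnit h
    simp [natDegree_X_sub_C] at this
  · have hX : (X - C c : F₀[X]) ≠ 0 := X_sub_C_ne_zero c
    have hg0 : g ≠ 0 := by rintro rfl; simp at hg; exact hirr.ne_zero hg
    have := natDegree_eq_zero_of_isUnit h
    have hdf : f.natDegree = 1 := by
      rw [hg, natDegree_mul hX hg0, natDegree_X_sub_C, this]
    omega

lemma aux_denom {f : F₀[X]} (hirr : Irreducible f) (hdeg : 2 ≤ f.natDegree)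
    (B : GL (Fin 2) F₀) {x : E} (hx : aeval x f = 0) :
    algebraMap F₀ E ((B : Matrix (Fin 2) (Fin 2) F₀) 0 1) * x
      + algebraMap F₀ E ((B : Matrix (Fin 2) (Fin 2) F₀) 1 1) ≠ 0 := by
  set A := (B : Matrix (Fin 2) (Fin 2) F₀)
  have hdet : A.det ≠ 0 := ((Matrix.isUnit_iff_isUnit_det A).mp ⟨B, rfl⟩).ne_zero
  by_cases hb : A 0 1 = 0
  · intro h
    have hd : A 1 1 ≠ 0 := by
      intro hd
      rw [Matrix.det_fin_two, hb, hd] at hdet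
      simp at hdet
    rw [hb, map_zero, zero_mul, zero_add] at h
    exact hd ((algebraMap F₀ E).injective (by simpa using h))
  · intro h
    have hbE : algebraMap F₀ E (A 0 1) ≠ 0 :=
      fun hc => hb ((algebraMap F₀ E).injective (by simpa using hc))
    apply aux_not_range hirr hdeg hx (-(A 1 1) / A 0 1)
    rw [map_div₀, map_neg]
    field_simp at h ⊢
    linear_combination h

end MuMap

lemma aux_aeval_mobApply {E : Type*} [Field E] [Algebra F E] {f : F[X]}
    (A : Matrix (Fin 2) (Fin 2) F) (x : E) :
    aeval x (mobApply A f) = ∑ i ∈ Finset.range (f.natDegree + 1),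
      algebraMap F E (f.coeff i) * (algebraMap F E (A 0 0) * x + algebraMap F E (A 1 0)) ^ i *
        (algebraMap F E (A 0 1) * x + algebraMap F E (A 1 1)) ^ (f.natDegree - i) := by
  simp [mobApply, map_sum]

lemma aux_root_map {E : Type*} [Field E] [Algebra F E] {f : F[X]}
    (hf : f.Monic) (A : Matrix (Fin 2) (Fin 2) F)
    (hB : mobAct A f = f) {x : E} (hx : aeval x f = 0)
    (hden : algebraMap F E (A 0 1) * x + algebraMap F E (A 1 1) ≠ 0) :
    aeval (muMap A x) f = 0 := by
  rw [muMap]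
  set N := algebraMap F E (A 0 0) * x + algebraMap F E (A 1 0)
  set D := algebraMap F E (A 0 1) * x + algebraMap F E (A 1 1)
  set k := f.natDegree with hk
  have hm0 : mobApply A f ≠ 0 := by
    intro h
    rw [mobAct, h] at hB
    exact hf.ne_zero (by simp [← hB])
  have hlc : (mobApply A f).leadingCoeff ≠ 0 := leadingCoeff_ne_zero.mpr hm0
  have hmf : mobApply A f = C (mobApply A f).leadingCoeff * f := by
    rw [mobAct] at hB
    calc mobApply A f = C (mobApply A f).leadingCoeff *
        (C (mobApply A f).leadingCoeff⁻¹ * mobApply A f) := by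
          rw [← mul_assoc, ← C_mul, mul_inv_cancel₀ hlc, C_1, one_mul]
      _ = _ := by rw [hB]
  have h1 : (∑ i ∈ Finset.range (k + 1),
      algebraMap F E (f.coeff i) * N ^ i * D ^ (k - i)) = 0 := by
    have := aux_aeval_mobApply (f := f) (E := E) A x
    rw [hmf] at this
    rw [← this, map_mul, aeval_C, hx, mul_zero]
  have h2 : D ^ k * aeval (N / D) f = ∑ i ∈ Finset.range (k + 1),
      algebraMap F E (f.coeff i) * N ^ i * D ^ (k - i) := by
    rw [aeval_eq_sum_range, Finset.mul_sum]
    apply Finset.sum_congr rfl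
    intro i hi
    have hik : i ≤ k := Nat.lt_succ_iff.mp (Finset.mem_range.mp hi)
    rw [Algebra.smul_def, div_pow, pow_sub₀ D hden hik]
    field_simp
  have hDk : D ^ k ≠ 0 := pow_ne_zero _ hden
  exact (mul_eq_zero.mp (h2.trans h1)).resolve_left hDk

lemma galCyclic (F₀ E : Type*) [Field F₀] [Fintype F₀] [Field E] [Fintype E] [Algebra F₀ E] :
    IsCyclic (E ≃ₐ[F₀] E) := by
  classical
  obtain ⟨p, hp⟩ := CharP.exists F₀
  haveI : CharP F₀ p := hp
  haveI hpp : Fact p.Prime := ⟨(CharP.char_is_prime F₀ p)⟩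
  haveI : CharP E p := charP_of_injective_algebraMap' F₀ (A := E) p
  obtain ⟨m, -, hcard⟩ := FiniteField.card F₀ p
  haveI : FiniteDimensional F₀ E := inferInstance
  haveI : Finite (E ≃ₐ[F₀] E) := @Finite.of_fintype _ (AlgEquiv.fintype F₀ E)
  set q := Fintype.card F₀ with hq
  have hq2 : 2 ≤ q := Fintype.one_lt_card
  have hfrob_comm : ∀ a : F₀,
      (iterateFrobenius E p (m : ℕ)) (algebraMap F₀ E a) = algebraMap F₀ E a := by
    intro a
    rw [iterateFrobenius_def, ← map_pow, ← hcard, FiniteField.pow_card]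
  let φAlg : E →ₐ[F₀] E :=
    { toRingHom := (iterateFrobenius E p (m : ℕ) : E →+* E), commutes' := hfrob_comm }
  have hbij : Function.Bijective φAlg :=
    (Finite.injective_iff_bijective).mp φAlg.toRingHom.injective
  let φ : E ≃ₐ[F₀] E := AlgEquiv.ofBijective φAlg hbij
  have hφ : ∀ x : E, φ x = x ^ q := by
    intro x
    show (iterateFrobenius E p (m : ℕ)) x = x ^ q
    rw [iterateFrobenius_def, hcard]
  have hφpow : ∀ (j : ℕ) (x : E), (φ ^ j) x = x ^ q ^ j := by
    intro j
    induction j with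
    | zero => intro x; simp
    | succ n ih =>
      intro x
      rw [pow_succ, AlgEquiv.mul_apply, hφ, ih, ← pow_mul, pow_succ, mul_comm]
  set k := Module.finrank F₀ E with hk
  have hcardE : Fintype.card E = q ^ k := Module.card_eq_pow_finrank
  have hcardGal : Nat.card (E ≃ₐ[F₀] E) = k := by
    have h := IsGalois.card_aut_eq_finrank F₀ E
    exact h
  obtain ⟨ζ, hζ⟩ := IsCyclic.exists_generator (α := Eˣ)
  have hordζ : orderOf ζ = q ^ k - 1 := by
    rw [orderOf_eq_card_of_forall_mem_zpowers hζ, Nat.card_units,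
      Nat.card_eq_fintype_card, hcardE]
  set j := orderOf φ with hj
  have hj0 : 0 < j := orderOf_pos φ
  have hφj : φ ^ j = 1 := pow_orderOf_eq_one φ
  have hζj : (ζ : E) ^ q ^ j = (ζ : E) := by
    have := congrArg (fun σ : E ≃ₐ[F₀] E => σ (ζ : E)) hφj
    simpa [hφpow j (ζ : E)] using this
  have hζju : ζ ^ q ^ j = ζ := Units.ext (by simpa using hζj)
  have hqj1 : 1 ≤ q ^ j := Nat.one_le_pow _ _ (by omega)
  have hdvd : orderOf ζ ∣ q ^ j - 1 := by
    apply orderOf_dvd_of_pow_eq_one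
    have : ζ ^ (q ^ j - 1) * ζ = ζ ^ (q ^ j) := by
      rw [← pow_succ, Nat.sub_add_cancel hqj1]
    rw [hζju] at this
    exact mul_right_cancel (by rw [this, one_mul])
  have hqj2 : 2 ≤ q ^ j := by
    calc 2 = 2 ^ 1 := rfl
    _ ≤ q ^ j := Nat.pow_le_pow_left hq2 1 |>.trans (Nat.pow_le_pow_right (by omega) hj0)
  have hkj : k ≤ j := by
    rw [hordζ] at hdvd
    have hle : q ^ k - 1 ≤ q ^ j - 1 := Nat.le_of_dvd (by omega) hdvd
    have : q ^ k ≤ q ^ j := by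
      have h1 : 1 ≤ q ^ k := Nat.one_le_pow _ _ (by omega)
      omega
    exact (Nat.pow_le_pow_iff_right hq2).mp this
  have hjk : j ∣ k := hcardGal ▸ orderOf_dvd_natCard φ
  have hk0 : 0 < k := Module.finrank_pos
  have hjk' : j ≤ k := Nat.le_of_dvd hk0 hjk
  have hjek : j = k := by omega
  exact isCyclic_of_orderOf_eq_card φ (by rw [← hj, hjek, hcardGal])

lemma scalar_mem_center {F₀ : Type*} [Field F₀] (B : GL (Fin 2) F₀) (a : F₀)
    (hB : (B : Matrix (Fin 2) (Fin 2) F₀) = a • (1 : Matrix (Fin 2) (Fin 2) F₀)) :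
    B ∈ Subgroup.center (GL (Fin 2) F₀) := by
  rw [Subgroup.mem_center_iff]
  intro g
  refine Units.ext ?_
  rw [Units.val_mul, Units.val_mul, hB]
  simp [Matrix.smul_mul, Matrix.mul_smul]

lemma center_scalar {F₀ : Type*} [Field F₀] (B : GL (Fin 2) F₀)
    (hB : B ∈ Subgroup.center (GL (Fin 2) F₀)) :
    ∃ a : F₀, a ≠ 0 ∧ (B : Matrix (Fin 2) (Fin 2) F₀) = a • (1 : Matrix (Fin 2) (Fin 2) F₀) := by
  rw [Subgroup.mem_center_iff] at hB
  set A := (B : Matrix (Fin 2) (Fin 2) F₀) with hA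
  have hu : ∀ u : GL (Fin 2) F₀, (u : Matrix (Fin 2) (Fin 2) F₀) * A = A * u := by
    intro u
    have h2 := congrArg (fun x : GL (Fin 2) F₀ => (x : Matrix (Fin 2) (Fin 2) F₀)) (hB u)
    simpa [Matrix.GeneralLinearGroup.coe_mul] using h2
  let u1 : GL (Fin 2) F₀ :=
    ⟨!![1,1;0,1], !![1,-1;0,1], by ext i j; fin_cases i <;> fin_cases j <;>
      simp [Matrix.mul_apply, Fin.sum_univ_succ], by ext i j; fin_cases i <;> fin_cases j <;>
      simp [Matrix.mul_apply, Fin.sum_univ_succ]⟩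
  let u2 : GL (Fin 2) F₀ :=
    ⟨!![1,0;1,1], !![1,0;-1,1], by ext i j; fin_cases i <;> fin_cases j <;>
      simp [Matrix.mul_apply, Fin.sum_univ_succ], by ext i j; fin_cases i <;> fin_cases j <;>
      simp [Matrix.mul_apply, Fin.sum_univ_succ]⟩
  have h1 := hu u1
  have h2 := hu u2
  have e10 : A 1 0 = 0 := by
    have := congrFun (congrFun h1 0) 0
    simpa [u1, Matrix.mul_apply, Fin.sum_univ_succ] using this
  have e01 : A 0 1 = 0 := by
    have := congrFun (congrFun h2 0) 0
    simpa [u2, Matrix.mul_apply, Fin.sum_univ_succ] using this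
  have e11 : A 1 1 = A 0 0 := by
    have := congrFun (congrFun h1 0) 1
    simp [u1, Matrix.mul_apply, Fin.sum_univ_succ] at this
    linear_combination this
  have hdet : A.det ≠ 0 := ((Matrix.isUnit_iff_isUnit_det A).mp ⟨B, rfl⟩).ne_zero
  have ha : A 0 0 ≠ 0 := by
    rw [Matrix.det_fin_two, e10, e01, e11] at hdet
    intro h; rw [h] at hdet; simp at hdet
  refine ⟨A 0 0, ha, ?_⟩
  ext i j
  fin_cases i <;> fin_cases j <;>
    simp [Matrix.one_apply, e10, e01, e11]

theorem noncyclic_invariant_degree_two (G : Subgroup (PGL2 F)) (hG : ¬IsCyclic G)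
    (f : F[X]) (hf : f.Monic) (hirr : Irreducible f) (hdeg : 2 ≤ f.natDegree)
    (hinv : ∀ B : GL (Fin 2) F, (B : PGL2 F) ∈ G →
      mobAct (B : Matrix (Fin 2) (Fin 2) F) f = f) :
    f.natDegree = 2 := by
  classical
  by_contra hne
  have h3 : 3 ≤ f.natDegree := by omega
  haveI : Fact (Irreducible f) := ⟨hirr⟩
  have hf0 : f ≠ 0 := hf.ne_zero
  set E := AdjoinRoot f with hE
  set α : E := AdjoinRoot.root f with hα
  have hroot : aeval α f = 0 := AdjoinRoot.eval₂_root f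
  have hmin : minpoly F α = f := by
    rw [AdjoinRoot.minpoly_root hf0, hf.leadingCoeff, inv_one, map_one, mul_one]
  haveI : FiniteDimensional F E := PowerBasis.finite (AdjoinRoot.powerBasis hf0)
  haveI : Finite E := Module.finite_of_finite F
  haveI : Fintype E := Fintype.ofFinite E
  -- the subgroup of GL₂ lying over G
  set H : Subgroup (GL (Fin 2) F) :=
    Subgroup.comap (QuotientGroup.mk' (Subgroup.center (GL (Fin 2) F))) G with hH
  have hstab : ∀ B : H, mobAct ((B : GL (Fin 2) F) : Matrix (Fin 2) (Fin 2) F) f = f :=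
    fun B => hinv B.1 B.2
  -- roots map to roots
  have hmuroot : ∀ B : H, aeval (muMap ((B : GL (Fin 2) F) : Matrix (Fin 2) (Fin 2) F) α) f = 0 :=
    fun B => aux_root_map hf _ (hstab B) hroot (aux_denom hirr hdeg B.1 hroot)
  -- the homomorphism to the Galois group
  let σfun : H → (E ≃ₐ[F] E) := fun B =>
    AlgEquiv.ofBijective (AdjoinRoot.liftAlgHom f (Algebra.ofId F E) _ (hmuroot B))
      ((Finite.injective_iff_bijective).mp (AdjoinRoot.liftAlgHom f (Algebra.ofId F E) _ (hmuroot B)).toRingHom.injective)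
  have hσ_root : ∀ B : H,
      σfun B α = muMap ((B : GL (Fin 2) F) : Matrix (Fin 2) (Fin 2) F) α :=
    fun B => (AlgEquiv.ofBijective_apply _ _ α).trans (AdjoinRoot.liftAlgHom_root f _ _ (hmuroot B))
  have ext_root : ∀ σ τ : E ≃ₐ[F] E, σ α = τ α → σ = τ := by
    intro σ τ h
    have h2 : (σ : E →ₐ[F] E) = (τ : E →ₐ[F] E) := AdjoinRoot.algHom_ext h
    exact AlgEquiv.ext fun x => by
      have := AlgHom.congr_fun h2 x
      simpa using this
  have hmul : ∀ B1 B2 : H, σfun (B1 * B2) = σfun B1 * σfun B2 := by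
    intro B1 B2
    apply ext_root
    rw [hσ_root, AlgEquiv.mul_apply, hσ_root, mu_algEquiv, hσ_root]
    have hcoe : (((B1 * B2 : H) : GL (Fin 2) F) : Matrix (Fin 2) (Fin 2) F)
        = ((B1 : GL (Fin 2) F) : Matrix (Fin 2) (Fin 2) F)
          * ((B2 : GL (Fin 2) F) : Matrix (Fin 2) (Fin 2) F) := by
      push_cast
      rfl
    rw [hcoe]
    rw [mu_comp _ _ _ (aux_denom hirr hdeg B1.1 hroot)
      (hcoe ▸ aux_denom hirr hdeg (B1 * B2 : H).1 hroot)
      (aux_denom hirr hdeg B2.1 (hmuroot B1))]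
  let Φ : H →* (E ≃ₐ[F] E) := MonoidHom.mk' σfun hmul
  -- the projection H →* G
  let π : H →* G :=
    { toFun := fun B => ⟨((B : GL (Fin 2) F) : PGL2 F), B.2⟩
      map_one' := rfl
      map_mul' := fun _ _ => rfl }
  have hπsurj : Function.Surjective π := by
    rintro ⟨g, hg⟩
    obtain ⟨B, hB⟩ := QuotientGroup.mk'_surjective (Subgroup.center (GL (Fin 2) F)) g
    refine ⟨⟨B, ?_⟩, ?_⟩
    · show QuotientGroup.mk' _ B ∈ G
      rw [hB]; exact hg
    · exact Subtype.ext hB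
  -- kernels agree
  have hker : ∀ B : H, Φ B = 1 ↔ (B : GL (Fin 2) F) ∈ Subgroup.center (GL (Fin 2) F) := by
    intro B
    set A := ((B : GL (Fin 2) F) : Matrix (Fin 2) (Fin 2) F) with hA
    constructor
    · intro h
      have hμ : muMap A α = α := by
        rw [← hσ_root B]
        show σfun B α = α
        rw [show σfun B = Φ B from rfl, h]
        rfl
      have hD := aux_denom hirr hdeg B.1 hroot
      rw [muMap, div_eq_iff hD] at hμ
      set P : F[X] := C (A 0 1) * X ^ 2 + C (A 1 1 - A 0 0) * X - C (A 1 0) with hP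
      have hPα : aeval α P = 0 := by
        simp only [hP, map_add, map_sub, map_mul, map_pow, aeval_C, aeval_X]
        linear_combination - hμ
      have hP0 : P = 0 := by
        by_contra hPne
        have hle := minpoly.degree_le_of_ne_zero F α hPne hPα
        rw [hmin] at hle
        have hndP : P.natDegree ≤ 2 := by
          rw [hP]
          compute_degree
        have := natDegree_le_natDegree hle
        omega
      have hb : A 0 1 = 0 := by
        have := congrArg (fun p : F[X] => p.coeff 2) hP0
        simpa [hP, coeff_C] using this
      have hc : A 1 0 = 0 := by
        have := congrArg (fun p : F[X] => p.coeff 0) hP0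
        simpa [hP, coeff_C] using this
      have hd : A 1 1 = A 0 0 := by
        have := congrArg (fun p : F[X] => p.coeff 1) hP0
        simp [hP, coeff_C] at this
        linear_combination this
      apply scalar_mem_center B.1 (A 0 0)
      ext i j
      fin_cases i <;> fin_cases j <;> simp [← hA, Matrix.one_apply, hb, hc, hd]
    · intro h
      obtain ⟨a, ha, hAeq⟩ := center_scalar B.1 h
      have hμ : muMap A α = α := by
        rw [muMap, hA, hAeq]
        have ha' : algebraMap F E a ≠ 0 := fun hc => ha ((algebraMap F E).injective (by simpa using hc))
        simp [Matrix.smul_apply, Matrix.one_apply]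
        exact mul_div_cancel_left₀ α ha'
      apply ext_root
      rw [show Φ B = σfun B from rfl, hσ_root, ← hA, hμ]
      rfl
  have hkerπΦ : π.ker = Φ.ker := by
    ext B
    rw [MonoidHom.mem_ker, MonoidHom.mem_ker, hker]
    constructor
    · intro h
      have h2 : ((B : GL (Fin 2) F) : PGL2 F) = 1 := congrArg Subtype.val h
      exact (QuotientGroup.eq_one_iff _).mp h2
    · intro h
      exact Subtype.ext ((QuotientGroup.eq_one_iff _).mpr h)
  -- assemble: G is cyclic, contradiction
  let e : G ≃* H ⧸ Φ.ker :=
    ((QuotientGroup.quotientKerEquivOfSurjective π hπsurj).symm).trans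
      (QuotientGroup.quotientMulEquivOfEq hkerπΦ)
  let ψ : G →* (E ≃ₐ[F] E) := (QuotientGroup.kerLift Φ).comp e.toMonoidHom
  have hψ : Function.Injective ψ :=
    fun a b h => e.injective (QuotientGroup.kerLift_injective Φ h)
  haveI : IsCyclic (E ≃ₐ[F] E) := galCyclic F E
  haveI := Subgroup.isCyclic ψ.range
  exact hG (isCyclic_of_surjective (MonoidHom.ofInjective hψ).symm
    (MonoidHom.ofInjective hψ).symm.surjective)
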